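/- If b is sampled uniformly from [0,1] and w, δ > 0, then the probability that ⌊log₂ w - b⌋ ≠ ⌊log₂(w+δ) - b⌋ is at most δ / (w · log 2), where log 2 denotes the natural logarithm of 2. -/

import Mathlib

open MeasureTheory

theorem stmt_2 (w δ : ℝ) (hw : 0 < w) (hδ : 0 < δ) :
    volume {b ∈ Set.Icc (0 : ℝ) 1 |
        ⌊Real.logb 2 w - b⌋ ≠ ⌊Real.logb 2 (w + δ) - b⌋}
      ≤ ENNReal.ofReal (δ / (w * Real.log 2)) := by
  set x := Real.logb 2 w with hx
  set y := Real.logb 2 (w + δ) with hy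
  have hlog2 : 0 < Real.log 2 := Real.log_pos (by norm_num)
  have hxy : x ≤ y := by
    rw [hx, hy]
    gcongr
    · norm_num
    · linarith
  set d := y - x with hd
  have hd0 : 0 ≤ d := by linarith
  have hdd' : d ≤ δ / (w * Real.log 2) := by
    have h1 : d = Real.log ((w + δ) / w) / Real.log 2 := by
      rw [hd, hx, hy, Real.logb, Real.logb, div_sub_div_same,
        ← Real.log_div (by linarith) (ne_of_gt hw)]
    have h2 : Real.log ((w + δ) / w) ≤ δ / w := by
      have h3 := Real.log_le_sub_one_of_pos (show 0 < (w + δ) / w by positivity)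
      have h4 : (w + δ) / w - 1 = δ / w := by field_simp; ring
      linarith
    rw [h1, ← div_div]
    gcongr
  set x' := Int.fract x with hx'
  have hx'0 : 0 ≤ x' := Int.fract_nonneg x
  have hx'1 : x' < 1 := Int.fract_lt_one x
  have hsub : {b ∈ Set.Icc (0 : ℝ) 1 | ⌊x - b⌋ ≠ ⌊y - b⌋} ⊆
      Set.Icc 0 (x' + d - 1) ∪ Set.Ioc x' (min (x' + d) 1) := by
    rintro b ⟨⟨hb0, hb1⟩, hne⟩
    have hlt : ⌊x - b⌋ < ⌊y - b⌋ :=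
      lt_of_le_of_ne (Int.floor_le_floor (by linarith)) hne
    have hle : ((⌊x - b⌋ : ℝ) + 1) ≤ y - b := by
      have := Int.le_floor.mp hlt
      push_cast at this ⊢
      linarith [Int.le_floor.mp (by exact_mod_cast hlt : ⌊x - b⌋ + 1 ≤ ⌊y - b⌋)]
    have hfr : 1 - Int.fract (x - b) ≤ d := by
      have := Int.fract_add_floor (x - b)
      linarith
    have hfe2 : Int.fract (x - b) = Int.fract (x' - b) := by
      have : x - b = (x' - b) + (⌊x⌋ : ℝ) := by
        rw [hx']; unfold Int.fract; ring
      rw [this, Int.fract_add_intCast]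
    by_cases hbx : b ≤ x'
    · left
      have hfe3 : Int.fract (x' - b) = x' - b :=
        Int.fract_eq_self.mpr ⟨by linarith, by linarith⟩
      rw [hfe2, hfe3] at hfr
      exact ⟨hb0, by linarith⟩
    · right
      push_neg at hbx
      have hfe3 : Int.fract (x' - b) = x' - b + 1 := by
        have h6 : Int.fract (x' - b + 1) = x' - b + 1 :=
          Int.fract_eq_self.mpr ⟨by linarith, by linarith⟩
        conv_lhs => rw [show x' - b = x' - b + 1 - ((1 : ℤ) : ℝ) by push_cast; ring,
          Int.fract_sub_intCast]
        exact h6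
      rw [hfe2, hfe3] at hfr
      exact ⟨hbx, le_min (by linarith) hb1⟩
  calc volume {b ∈ Set.Icc (0 : ℝ) 1 | ⌊x - b⌋ ≠ ⌊y - b⌋}
      ≤ volume (Set.Icc 0 (x' + d - 1) ∪ Set.Ioc x' (min (x' + d) 1)) :=
        measure_mono hsub
    _ ≤ volume (Set.Icc 0 (x' + d - 1)) + volume (Set.Ioc x' (min (x' + d) 1)) :=
        measure_union_le _ _
    _ = ENNReal.ofReal (x' + d - 1 - 0) + ENNReal.ofReal (min (x' + d) 1 - x') := by
        rw [Real.volume_Icc, Real.volume_Ioc]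
    _ ≤ ENNReal.ofReal (δ / (w * Real.log 2)) := by
        by_cases hc : x' + d ≤ 1
        · have : min (x' + d) 1 = x' + d := min_eq_left hc
          rw [this, ENNReal.ofReal_eq_zero.mpr (by linarith), zero_add]
          exact ENNReal.ofReal_le_ofReal (by linarith)
        · push_neg at hc
          have : min (x' + d) 1 = 1 := min_eq_right hc.le
          rw [this, ← ENNReal.ofReal_add (by linarith) (by linarith)]
          exact ENNReal.ofReal_le_ofReal (by linarith)
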